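/- Let $b,T>0$ and $\hat K(s,t)=K(s,t)-\frac{K(s,T)K(t,T)}{V(T)}$ be the covariance kernel of the Ornstein-Uhlenbeck bridge, where $K(s,t)=\frac{1}{2b}e^{-b|t-s|}-\frac{1}{2b}e^{-b(t+s)}$ and $V(T)=K(T,T)$. Then for every $n\ge 1$, the function $\hat f_n(t)=\sqrt{2/T}\sin(n\pi t/T)$ satisfies $\int_0^T \hat K(s,t)\hat f_n(t)\,dt=\hat\lambda_n \hat f_n(s)$ for all $s\in[0,T]$, with eigenvalue $\hat\lambda_n=\frac{T^2}{b^2T^2+n^2\pi^2}$. -/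

import Mathlib

open Real MeasureTheory

noncomputable def G (b ω p q : ℝ) (t : ℝ) : ℝ :=
  (p * Real.exp (b*t) * (b * Real.sin (ω*t) - ω * Real.cos (ω*t))
   + q * Real.exp (-b*t) * (-(b * Real.sin (ω*t)) - ω * Real.cos (ω*t))) / (b^2 + ω^2)

lemma int_aux (b ω p q u v : ℝ) (h : b ^ 2 + ω ^ 2 ≠ 0) :
    (∫ t in u..v, (p * Real.exp (b * t) + q * Real.exp (-b * t)) * Real.sin (ω * t)) =
      G b ω p q v - G b ω p q u := by
  have key : ∀ t : ℝ, HasDerivAt (G b ω p q)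
      ((p * Real.exp (b * t) + q * Real.exp (-b * t)) * Real.sin (ω * t)) t := by
    intro t
    have hexp : ∀ a : ℝ, HasDerivAt (fun t => Real.exp (a*t)) (a * Real.exp (a*t)) t := by
      intro a
      simpa [mul_comm, Function.comp_def] using (Real.hasDerivAt_exp (a*t)).comp t ((hasDerivAt_id t).const_mul a)
    have hsin : HasDerivAt (fun t => Real.sin (ω*t)) (ω * Real.cos (ω*t)) t := by
      simpa [mul_comm, Function.comp_def] using (Real.hasDerivAt_sin (ω*t)).comp t ((hasDerivAt_id t).const_mul ω)
    have hcos : HasDerivAt (fun t => Real.cos (ω*t)) (-(ω * Real.sin (ω*t))) t := by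
      simpa [mul_comm, Function.comp_def] using (Real.hasDerivAt_cos (ω*t)).comp t ((hasDerivAt_id t).const_mul ω)
    have H := ((((hexp b).const_mul p).mul ((hsin.const_mul b).sub (hcos.const_mul ω))).add
      (((hexp (-b)).const_mul q).mul (((hsin.const_mul b).neg).sub (hcos.const_mul ω)))).div_const
      (b^2 + ω^2)
    refine H.congr_deriv ?_
    simp only [Pi.sub_apply, Pi.neg_apply]
    field_simp
    ring
  rw [intervalIntegral.integral_eq_sub_of_hasDerivAt (fun t _ => key t)
    (by apply Continuous.intervalIntegrable; fun_prop)]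

set_option maxHeartbeats 2000000 in
theorem ou_bridge_KL_eigenfunction (b T : ℝ) (hb : 0 < b) (hT : 0 < T)
    (K : ℝ → ℝ → ℝ)
    (hK : ∀ s t, K s t = 1 / (2 * b) * Real.exp (-b * |t - s|)
        - 1 / (2 * b) * Real.exp (-b * (t + s)))
    (V : ℝ → ℝ) (hV : ∀ s, V s = K s s)
    (Khat : ℝ → ℝ → ℝ)
    (hKhat : ∀ s t, Khat s t = K s t - K s T * K t T / V T)
    (n : ℕ) (hn : 1 ≤ n)
    (fhat : ℝ → ℝ)
    (hfhat : ∀ t, fhat t = Real.sqrt (2 / T) * Real.sin ((n : ℝ) * π * t / T)) :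
    ∀ s ∈ Set.Icc (0:ℝ) T,
      (∫ t in (0:ℝ)..T, Khat s t * fhat t) =
        T ^ 2 / (b ^ 2 * T ^ 2 + (n : ℝ) ^ 2 * π ^ 2) * fhat s := by
  intro s hs
  obtain ⟨hs0, hsT⟩ := hs
  have hTne : T ≠ 0 := hT.ne'
  have hbne : b ≠ 0 := hb.ne'
  set ω := (n:ℝ) * π / T with hω
  have harg : ∀ t : ℝ, (n:ℝ) * π * t / T = ω * t := fun t => by rw [hω]; ring
  have hsinT : Real.sin (ω * T) = 0 := by
    rw [show ω * T = (n:ℝ) * π by rw [hω]; field_simp]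
    exact Real.sin_nat_mul_pi n
  have hden : b ^ 2 + ω ^ 2 ≠ 0 := by positivity
  -- exp facts
  have h1e : (1:ℝ) < Real.exp (b*T) := by
    calc (1:ℝ) = Real.exp 0 := Real.exp_zero.symm
    _ < Real.exp (b*T) := Real.exp_lt_exp.mpr (by positivity)
  have hKsT : K s T = ((Real.exp (b*T))⁻¹ * Real.exp (b*s)
      - (Real.exp (b*T))⁻¹ * (Real.exp (b*s))⁻¹) / (2*b) := by
    rw [hK]
    rw [abs_of_nonneg (by linarith : (0:ℝ) ≤ T - s),
      show -b*(T-s) = -(b*T) + b*s by ring, show -b*(T+s) = -(b*T) + -(b*s) by ring]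
    simp only [Real.exp_add, Real.exp_neg]
    ring
  have hVTval : V T = (1 - (Real.exp (b*T))⁻¹ * (Real.exp (b*T))⁻¹) / (2*b) := by
    rw [hV, hK, sub_self, abs_zero, mul_zero, Real.exp_zero,
      show -b*(T+T) = -(b*T) + -(b*T) by ring]
    simp only [Real.exp_add, Real.exp_neg]
    ring
  have hVne : V T ≠ 0 := by
    rw [hVTval]
    have h2 : (Real.exp (b*T))⁻¹ < 1 := by
      rw [inv_lt_one_iff₀]; right; exact h1e
    have h3 : (0:ℝ) < (Real.exp (b*T))⁻¹ := by positivity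
    have : 0 < 1 - (Real.exp (b*T))⁻¹ * (Real.exp (b*T))⁻¹ := by nlinarith
    positivity
  set D := K s T / V T with hD
  -- continuity of the integrand
  have hcont : Continuous fun t => Khat s t * Real.sin (ω * t) := by
    have : (fun t => Khat s t * Real.sin (ω*t)) = fun t =>
        ((1 / (2 * b) * Real.exp (-b * |t - s|) - 1 / (2 * b) * Real.exp (-b * (t + s)))
          - K s T * (1 / (2 * b) * Real.exp (-b * |T - t|)
            - 1 / (2 * b) * Real.exp (-b * (T + t))) / V T) * Real.sin (ω*t) := by
      funext t; rw [hKhat, hK s t, hK t T]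
    rw [this]
    fun_prop
  -- coefficients
  set p₁ : ℝ := (Real.exp (b*s))⁻¹ / (2*b) - D * (Real.exp (b*T))⁻¹ / (2*b) with hp₁
  set q₁ : ℝ := -((Real.exp (b*s))⁻¹ / (2*b)) + D * (Real.exp (b*T))⁻¹ / (2*b) with hq₁
  set p₂ : ℝ := -(D * (Real.exp (b*T))⁻¹ / (2*b)) with hp₂
  set q₂ : ℝ := Real.exp (b*s) / (2*b) - (Real.exp (b*s))⁻¹ / (2*b)
      + D * (Real.exp (b*T))⁻¹ / (2*b) with hq₂
  have h1 : (∫ t in (0:ℝ)..s, Khat s t * Real.sin (ω*t)) = G b ω p₁ q₁ s - G b ω p₁ q₁ 0 := by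
    rw [← int_aux b ω p₁ q₁ 0 s hden]
    apply intervalIntegral.integral_congr
    intro t ht
    beta_reduce
    rw [Set.uIcc_of_le hs0] at ht
    rw [hKhat, hK s t, hK t T,
      abs_of_nonpos (by linarith [ht.2] : t - s ≤ 0),
      abs_of_nonneg (by linarith [ht.2, hsT] : (0:ℝ) ≤ T - t),
      show -(t-s) = s - t by ring,
      show -b*(s-t) = -(b*s) + b*t by ring,
      show -b*(t+s) = -(b*t) + -(b*s) by ring,
      show -b*(T-t) = -(b*T) + b*t by ring,
      show -b*(T+t) = -(b*T) + -(b*t) by ring,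
      hp₁, hq₁, hD]
    simp only [neg_mul, Real.exp_add, Real.exp_neg]
    field_simp [hVne]
    ring
  have h2 : (∫ t in s..T, Khat s t * Real.sin (ω*t)) = G b ω p₂ q₂ T - G b ω p₂ q₂ s := by
    rw [← int_aux b ω p₂ q₂ s T hden]
    apply intervalIntegral.integral_congr
    intro t ht
    beta_reduce
    rw [Set.uIcc_of_le hsT] at ht
    rw [hKhat, hK s t, hK t T,
      abs_of_nonneg (by linarith [ht.1] : (0:ℝ) ≤ t - s),
      abs_of_nonneg (by linarith [ht.2] : (0:ℝ) ≤ T - t),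
      show -b*(t-s) = -(b*t) + b*s by ring,
      show -b*(t+s) = -(b*t) + -(b*s) by ring,
      show -b*(T-t) = -(b*T) + b*t by ring,
      show -b*(T+t) = -(b*T) + -(b*t) by ring,
      hp₂, hq₂, hD]
    simp only [neg_mul, Real.exp_add, Real.exp_neg]
    field_simp [hVne]
    ring
  have hsplit : (∫ t in (0:ℝ)..T, Khat s t * Real.sin (ω*t))
      = (∫ t in (0:ℝ)..s, Khat s t * Real.sin (ω*t)) + ∫ t in s..T, Khat s t * Real.sin (ω*t) :=
    (intervalIntegral.integral_add_adjacent_intervals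
      (hcont.intervalIntegrable 0 s) (hcont.intervalIntegrable s T)).symm
  have hstep : (∫ t in (0:ℝ)..T, Khat s t * fhat t)
      = Real.sqrt (2/T) * ∫ t in (0:ℝ)..T, Khat s t * Real.sin (ω*t) := by
    rw [← intervalIntegral.integral_const_mul]
    apply intervalIntegral.integral_congr
    intro t _
    beta_reduce
    rw [hfhat t, harg t]; ring
  rw [hstep, hsplit, h1, h2, hfhat s, harg s]
  have key : G b ω p₁ q₁ s - G b ω p₁ q₁ 0 + (G b ω p₂ q₂ T - G b ω p₂ q₂ s)
      = T ^ 2 / (b ^ 2 * T ^ 2 + (n : ℝ) ^ 2 * π ^ 2) * Real.sin (ω * s) := by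
    have hden2 : b ^ 2 * T ^ 2 + (n:ℝ) ^ 2 * π ^ 2 ≠ 0 := by
      have h4 : 0 < b ^ 2 * T ^ 2 := by positivity
      have h5 : 0 ≤ ((n:ℝ)) ^ 2 * π ^ 2 := by positivity
      linarith
    have hnum : 1 - (Real.exp (b*T))⁻¹ * (Real.exp (b*T))⁻¹ ≠ 0 := by
      have h2 : (Real.exp (b*T))⁻¹ < 1 := by rw [inv_lt_one_iff₀]; right; exact h1e
      have h3 : (0:ℝ) < (Real.exp (b*T))⁻¹ := by positivity
      nlinarith
    have hnum2 : Real.exp (b*T) * Real.exp (b*T) - 1 ≠ 0 := by nlinarith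
    simp only [G, hp₁, hq₁, hp₂, hq₂, hD, hKsT, hVTval, mul_zero, Real.exp_zero,
      Real.sin_zero, Real.cos_zero, hsinT, neg_mul, Real.exp_neg, hω]
    have hE2 : Real.exp (b*T) ^ 2 - 1 ≠ 0 := by rw [pow_two]; exact hnum2
    field_simp
    simp only [Real.sin_nat_mul_pi]
    ring
  rw [key]
  ring
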